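/- For every positive integer k, the triples (k(2k-1), k(2k-1), 1) and ((2k-1)², k, k) have the same sum and the same product; consequently the complete tripartite graphs K_{k(2k-1),k(2k-1),1} and K_{(2k-1)²,k,k} are Seidel cospectral, and for k > 1 these triples are different. -/

import Mathlib

open Polynomial Matrix

open scoped Classical in
/-- The Seidel matrix of a simple graph: 0 on the diagonal, -1 for adjacent pairs,
1 for distinct non-adjacent pairs. -/
noncomputable def seidel {V : Type*} [Fintype V] (G : SimpleGraph V) : Matrix V V ℝ :=
  fun i j => if i = j then 0 else if G.Adj i j then -1 else 1

/-- The complete multipartite graph with parts of sizes `p 0, ..., p (k-1)`. -/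
def completeMultipartite {k : ℕ} (p : Fin k → ℕ) : SimpleGraph (Σ i : Fin k, Fin (p i)) where
  Adj u v := u.1 ≠ v.1
  symm := ⟨fun _ _ h => h.symm⟩
  loopless := ⟨fun _ h => h rfl⟩

section rect
variable {F : Type*} [Field F] {n m : Type*} [Fintype n] [Fintype m] [DecidableEq n] [DecidableEq m]

lemma det_smul_one_sub_mul_comm {L : Type*} [Field L] {x : L} (A : Matrix n m L) (B : Matrix m n L) :
    (x • (1 : Matrix n n L) - A * B).det * x ^ Fintype.card m
      = (x • (1 : Matrix m m L) - B * A).det * x ^ Fintype.card n := by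
  by_cases hx : x = 0
  · subst hx
    rcases isEmpty_or_nonempty m with hm | hm
    · have hAB : A * B = 0 := by ext i j; simp [Matrix.mul_apply]
      rcases isEmpty_or_nonempty n with hn | hn
      · simp
      · simp [hAB, Fintype.card_eq_zero, Matrix.det_zero, zero_pow, Fintype.card_pos.ne']
    · have hne : (0:L) ^ Fintype.card m = 0 := zero_pow Fintype.card_pos.ne'
      rcases isEmpty_or_nonempty n with hn | hn
      · have hBA : B * A = 0 := by ext i j; simp [Matrix.mul_apply]
        simp [hBA, Fintype.card_eq_zero, Matrix.det_zero, hne]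
      · simp [hne, zero_pow, Fintype.card_pos.ne']
  · have h1 : x • (1 : Matrix n n L) - A * B = x • (1 + (-(x⁻¹ • A)) * B) := by
      rw [Matrix.neg_mul, Matrix.smul_mul, smul_add, smul_neg, smul_smul, mul_inv_cancel₀ hx,
        one_smul, ← sub_eq_add_neg]
    have h2 : x • (1 : Matrix m m L) - B * A = x • (1 + B * (-(x⁻¹ • A))) := by
      rw [Matrix.mul_neg, Matrix.mul_smul, smul_add, smul_neg, smul_smul, mul_inv_cancel₀ hx,
        one_smul, ← sub_eq_add_neg]
    rw [h1, h2, det_smul, det_smul, det_one_add_mul_comm]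
    ring

lemma charpoly_map_det {F : Type*} [Field F] {L : Type*} [CommRing L] (φ : F[X] →+* L)
    {ι : Type*} [Fintype ι] [DecidableEq ι] (M : Matrix ι ι F) :
    φ M.charpoly = ((φ X) • (1 : Matrix ι ι L) - M.map (φ.comp C)).det := by
  rw [Matrix.charpoly, RingHom.map_det]
  congr 1
  ext i j
  by_cases h : i = j
  · subst h
    simp [Matrix.map_apply, charmatrix_apply_eq, Matrix.sub_apply, Matrix.smul_apply,
      Matrix.one_apply, map_sub]
  · simp [Matrix.map_apply, charmatrix_apply_ne _ _ _ h, Matrix.sub_apply, Matrix.smul_apply,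
      Matrix.one_apply, h]

lemma charpoly_mul_comm_rect (V : Matrix n m F) (Q : Matrix m n F) :
    (V * Q).charpoly * X ^ Fintype.card m = (Q * V).charpoly * X ^ Fintype.card n := by
  classical
  let L := FractionRing F[X]
  let φ : F[X] →+* L := algebraMap F[X] L
  have hφ : Function.Injective φ := IsFractionRing.injective F[X] L
  apply hφ
  have hmul1 : (V * Q).map (φ.comp C) = V.map (φ.comp C) * Q.map (φ.comp C) :=
    Matrix.map_mul
  have hmul2 : (Q * V).map (φ.comp C) = Q.map (φ.comp C) * V.map (φ.comp C) :=
    Matrix.map_mul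
  rw [_root_.map_mul, _root_.map_mul, map_pow, map_pow, charpoly_map_det φ, charpoly_map_det φ, hmul1, hmul2]
  exact det_smul_one_sub_mul_comm _ _

end rect

def A3 : Matrix (Fin 3) (Fin 3) ℝ := fun i j => if i = j then 1 else -1

def partV (p : Fin 3 → ℕ) : Matrix (Σ i : Fin 3, Fin (p i)) (Fin 3) ℝ :=
  fun u j => if u.1 = j then 1 else 0

lemma seidel_eq_aux (p : Fin 3 → ℕ) :
    seidel (completeMultipartite p) = partV p * (A3 * (partV p)ᵀ) - 1 := by
  ext u v
  have hmul : (partV p * (A3 * (partV p)ᵀ)) u v = A3 u.1 v.1 := by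
    rw [Matrix.mul_apply]
    simp only [Matrix.mul_apply, partV, Matrix.transpose_apply]
    rw [Finset.sum_eq_single u.1]
    · simp only [if_pos rfl, one_mul]
      rw [Finset.sum_eq_single v.1]
      · simp
      · intro b _ hb; simp [Ne.symm hb]
      · simp
    · intro b _ hb; simp [Ne.symm hb]
    · simp
  simp only [Matrix.sub_apply, hmul, seidel, completeMultipartite, Matrix.one_apply]
  by_cases h : u = v
  · subst h; simp [A3]
  · simp only [if_neg h]
    by_cases h1 : u.1 = v.1
    · simp [A3, h1, h]
    · simp [A3, h1, h]

lemma VtV (p : Fin 3 → ℕ) :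
    (partV p)ᵀ * partV p = Matrix.diagonal (fun i => (p i : ℝ)) := by
  ext i j
  rw [Matrix.mul_apply, ← Finset.univ_sigma_univ, Finset.sum_sigma]
  simp only [Matrix.transpose_apply, partV]
  by_cases h : i = j
  · subst h
    rw [Finset.sum_eq_single i]
    · simp [Finset.card_univ]
    · intro b _ hb
      simp [hb]
    · simp
  · rw [Finset.sum_eq_zero, Matrix.diagonal_apply_ne _ h]
    intro a _
    apply Finset.sum_eq_zero
    intro b _
    by_cases ha : a = i
    · simp [ha, h]
    · simp [ha]

lemma charpoly_sub_one {ι : Type*} [Fintype ι] [DecidableEq ι] (M : Matrix ι ι ℝ) :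
    (M - 1).charpoly = eval₂RingHom C (X + 1) M.charpoly := by
  rw [Matrix.charpoly, Matrix.charpoly, RingHom.map_det]
  congr 1
  ext i j : 2
  by_cases h : i = j
  · subst h
    simp only [RingHom.mapMatrix_apply, charmatrix_apply_eq, Matrix.map_apply, Matrix.sub_apply,
      Matrix.one_apply_eq, coe_eval₂RingHom, eval₂_sub, eval₂_X, eval₂_C, map_sub, C_sub, C_1]
    ring
  · simp [RingHom.mapMatrix_apply, charmatrix_apply_ne _ _ _ h, Matrix.map_apply,
      Matrix.sub_apply, Matrix.one_apply_ne h, h]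

lemma charpoly_A3_diag (d : Fin 3 → ℝ) :
    (A3 * Matrix.diagonal d).charpoly =
      X ^ 3 - C (d 0 + d 1 + d 2) * X ^ 2 + C (4 * (d 0 * d 1 * d 2)) := by
  have hcm : (A3 * Matrix.diagonal d).charmatrix =
      !![X - C (d 0), C (d 1), C (d 2);
         C (d 0), X - C (d 1), C (d 2);
         C (d 0), C (d 1), X - C (d 2)] := by
    ext i j
    fin_cases i <;> fin_cases j <;>
      simp [charmatrix_apply, A3, Matrix.mul_diagonal, Matrix.diagonal_apply,
        Matrix.vecHead, Matrix.vecTail]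
  rw [Matrix.charpoly, hcm, Matrix.det_fin_three]
  simp [Matrix.vecHead, Matrix.vecTail]
  have h4 : (C 4 : ℝ[X]) = 4 := by
    rw [show (4:ℝ) = ((4:ℕ):ℝ) by norm_num, map_natCast]
    norm_num
  simp only [C_add, C_mul, h4]
  ring

lemma cospectral_aux (p q : Fin 3 → ℕ)
    (hs : ∑ i, p i = ∑ i, q i)
    (hprod : (p 0 : ℝ) * p 1 * p 2 = (q 0 : ℝ) * q 1 * q 2) :
    (seidel (completeMultipartite p)).charpoly = (seidel (completeMultipartite q)).charpoly := by
  rw [seidel_eq_aux, seidel_eq_aux, charpoly_sub_one, charpoly_sub_one]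
  congr 1
  have h1 := charpoly_mul_comm_rect (partV p) (A3 * (partV p)ᵀ)
  have h2 := charpoly_mul_comm_rect (partV q) (A3 * (partV q)ᵀ)
  rw [Matrix.mul_assoc, VtV, charpoly_A3_diag] at h1 h2
  have hsum : (p 0 : ℝ) + p 1 + p 2 = q 0 + q 1 + q 2 := by
    rw [Fin.sum_univ_three, Fin.sum_univ_three] at hs
    exact_mod_cast hs
  have hcard : Fintype.card (Σ i : Fin 3, Fin (p i)) = Fintype.card (Σ i : Fin 3, Fin (q i)) := by
    simp only [Fintype.card_sigma, Fintype.card_fin]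
    exact hs
  rw [hsum, hprod, hcard] at h1
  exact mul_right_cancel₀ (pow_ne_zero _ X_ne_zero) (h1.trans h2.symm)

theorem tripartite_prr_ppr_cospectral (k : ℕ) (hk : 1 ≤ k) :
    (k * (2 * k - 1) + k * (2 * k - 1) + 1 = (2 * k - 1) ^ 2 + k + k) ∧
    ((k * (2 * k - 1)) * (k * (2 * k - 1)) * 1 = (2 * k - 1) ^ 2 * k * k) ∧
    (seidel (completeMultipartite ![k * (2 * k - 1), k * (2 * k - 1), 1])).charpoly =
      (seidel (completeMultipartite ![(2 * k - 1) ^ 2, k, k])).charpoly ∧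
    (1 < k → (k * (2 * k - 1), k * (2 * k - 1), 1) ≠ ((2 * k - 1) ^ 2, k, k)) := by
  obtain ⟨j, rfl⟩ : ∃ j, k = j + 1 := ⟨k - 1, by omega⟩
  have h2k : 2 * (j + 1) - 1 = 2 * j + 1 := by omega
  have hs : (j+1) * (2 * (j+1) - 1) + (j+1) * (2 * (j+1) - 1) + 1
      = (2 * (j+1) - 1) ^ 2 + (j+1) + (j+1) := by rw [h2k]; ring
  have hp : ((j+1) * (2 * (j+1) - 1)) * ((j+1) * (2 * (j+1) - 1)) * 1
      = (2 * (j+1) - 1) ^ 2 * (j+1) * (j+1) := by rw [h2k]; ring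
  refine ⟨hs, hp, ?_, ?_⟩
  · apply cospectral_aux
    · rw [Fin.sum_univ_three, Fin.sum_univ_three]
      simpa using hs
    · have : (((j+1) * (2 * (j+1) - 1) : ℕ) : ℝ) * (((j+1) * (2 * (j+1) - 1) : ℕ) : ℝ) * ((1:ℕ):ℝ)
          = (((2 * (j+1) - 1) ^ 2 : ℕ) : ℝ) * ((j+1 : ℕ) : ℝ) * ((j+1 : ℕ) : ℝ) := by
        exact_mod_cast congrArg (fun n : ℕ => (n : ℝ)) hp
      simpa using this
  · intro h1 heq
    have h2 : (j+1) * (2 * (j+1) - 1) = (j+1) := congrArg (fun t => t.2.1) heq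
    rw [h2k] at h2
    nlinarith [h2, h1]
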